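/- The n-th Catalan number c_n = (1/n)·C(2n−2, n−1) is odd if and only if n is a power of 2 (i.e., n = 2^m for some m ≥ 0). -/

import Mathlib

open Finset

private lemma catalan_succ_range (n : ℕ) :
    catalan (n + 1) = ∑ i ∈ Finset.range (n + 1), catalan i * catalan (n - i) := by
  rw [catalan_succ]
  exact (Finset.sum_range fun i => catalan i * catalan (n - i)).symm

private lemma zmod2_mul_self : ∀ x : ZMod 2, x * x = x := by decide

/-- If `n` is odd then `catalan (n+1)` is even. -/
private lemma catalan_cast_eq_zero {n : ℕ} (hn : Odd n) :
    ((catalan (n + 1) : ZMod 2)) = 0 := by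
  rw [catalan_succ_range]
  push_cast
  refine Finset.sum_involution (fun a _ => n - a) ?_ ?_ ?_ ?_
  · intro a ha
    have ha' : a ≤ n := by have := Finset.mem_range.mp ha; omega
    show (catalan a : ZMod 2) * (catalan (n - a) : ZMod 2) +
      (catalan (n - a) : ZMod 2) * (catalan (n - (n - a)) : ZMod 2) = 0
    have h2 : n - (n - a) = a := by omega
    rw [h2, mul_comm]
    exact CharTwo.add_self_eq_zero _
  · intro a ha _
    have ha' : a ≤ n := by have := Finset.mem_range.mp ha; omega
    show n - a ≠ a
    rcases hn with ⟨t, ht⟩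
    omega
  · intro a _
    show n - a ∈ Finset.range (n + 1)
    exact Finset.mem_range.mpr (by omega)
  · intro a ha
    have ha' : a ≤ n := by have := Finset.mem_range.mp ha; omega
    show n - (n - a) = a
    omega

/-- `catalan (2k+1) ≡ catalan k (mod 2)`. -/
private lemma catalan_cast_even {k : ℕ} :
    ((catalan (2 * k + 1) : ZMod 2)) = (catalan k : ZMod 2) := by
  rw [catalan_succ_range]
  push_cast
  have hk : k ∈ Finset.range (2 * k + 1) := Finset.mem_range.mpr (by omega)
  rw [← Finset.add_sum_erase _ _ hk]
  have h0 : ∑ i ∈ (Finset.range (2 * k + 1)).erase k,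
      (catalan i : ZMod 2) * (catalan (2 * k - i) : ZMod 2) = 0 := by
    refine Finset.sum_involution (fun a _ => 2 * k - a) ?_ ?_ ?_ ?_
    · intro a ha
      have ha' : a ≤ 2 * k := by
        have := Finset.mem_range.mp (Finset.mem_of_mem_erase ha); omega
      show (catalan a : ZMod 2) * (catalan (2 * k - a) : ZMod 2) +
        (catalan (2 * k - a) : ZMod 2) * (catalan (2 * k - (2 * k - a)) : ZMod 2) = 0
      have h2 : 2 * k - (2 * k - a) = a := by omega
      rw [h2, mul_comm]
      exact CharTwo.add_self_eq_zero _
    · intro a ha _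
      have hne : a ≠ k := Finset.ne_of_mem_erase ha
      have ha' : a ≤ 2 * k := by
        have := Finset.mem_range.mp (Finset.mem_of_mem_erase ha); omega
      show 2 * k - a ≠ a
      omega
    · intro a ha
      have hne : a ≠ k := Finset.ne_of_mem_erase ha
      have ha' : a ≤ 2 * k := by
        have := Finset.mem_range.mp (Finset.mem_of_mem_erase ha); omega
      show 2 * k - a ∈ (Finset.range (2 * k + 1)).erase k
      exact Finset.mem_erase.mpr ⟨by omega, Finset.mem_range.mpr (by omega)⟩
    · intro a ha
      have ha' : a ≤ 2 * k := by
        have := Finset.mem_range.mp (Finset.mem_of_mem_erase ha); omega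
      show 2 * k - (2 * k - a) = a
      omega
  rw [h0, add_zero]
  have h3 : 2 * k - k = k := by omega
  rw [h3, zmod2_mul_self]

private lemma catalan_odd_aux : ∀ k : ℕ, Odd (catalan k) ↔ ∃ m : ℕ, k + 1 = 2 ^ m := by
  intro k
  induction k using Nat.strong_induction_on with
  | _ k ih =>
    match k with
    | 0 => exact ⟨fun _ => ⟨0, rfl⟩, fun _ => by simp⟩
    | n + 1 =>
      rcases Nat.even_or_odd n with he | ho
      · obtain ⟨k', hk'⟩ := he
        subst hk'
        have hn : k' + k' = 2 * k' := by ring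
        rw [hn]
        have hcast : ((catalan (2 * k' + 1) : ZMod 2)) = (catalan k' : ZMod 2) :=
          catalan_cast_even
        have h1 : Odd (catalan (2 * k' + 1)) ↔ Odd (catalan k') := by
          rw [← ZMod.natCast_eq_one_iff_odd, ← ZMod.natCast_eq_one_iff_odd, hcast]
        rw [h1, ih k' (by omega)]
        constructor
        · rintro ⟨m, hm⟩
          exact ⟨m + 1, by rw [pow_succ]; omega⟩
        · rintro ⟨m, hm⟩
          match m with
          | 0 => omega
          | m + 1 =>
            refine ⟨m, ?_⟩
            rw [pow_succ] at hm
            omega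
      · have h0 : ((catalan (n + 1) : ZMod 2)) = 0 := catalan_cast_eq_zero ho
        have heven : ¬ Odd (catalan (n + 1)) := by
          intro h
          rw [← ZMod.natCast_eq_one_iff_odd] at h
          rw [h0] at h
          exact absurd h (by decide)
        constructor
        · intro h; exact absurd h heven
        · rintro ⟨m, hm⟩
          exfalso
          match m with
          | 0 => omega
          | m + 1 =>
            rcases ho with ⟨t, ht⟩
            have hp : 2 ^ (m + 1) = 2 ^ m * 2 := pow_succ 2 m
            omega

/-- The `n`-th Catalan number `c_n = (1/n)·C(2n−2,n−1) = catalan (n-1)` (for `n ≥ 1`)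
is odd if and only if `n` is a power of 2. -/
theorem catalan_odd_iff_pow_two (n : ℕ) (hn : 1 ≤ n) :
    Odd (catalan (n - 1)) ↔ ∃ m : ℕ, n = 2 ^ m := by
  have := catalan_odd_aux (n - 1)
  rwa [Nat.sub_add_cancel hn] at this
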